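/- Let P ∈ ℝ^{n×r}, Q ∈ ℝ^{ℓ×n}, R ∈ ℝ^{ℓ×r} satisfy im R ⊆ im Q and ker P ⊆ ker R (so that 𝒜 := { A ∈ ℝ^{n×n} : R = Q A P } is nonempty), and let B ∈ ℝ^{n×m}, C ∈ ℝ^{p×n}, D ∈ ℝ^{p×m}. Then: (i) rank [[A − λI, B],[C, D]] = n + rank [[B],[D]] for all A ∈ 𝒜 and all λ ∈ ℂ if and only if C⁻¹(im D) ⊆ im P and rank [[R − λQP, QB],[CP, D]] = rank P + rank [[QB],[D]] for all λ ∈ ℂ. (ii) rank [[A − λI, B],[C, D]] = n + rank [[B],[D]] for all A ∈ 𝒜 and all λ ∈ ℂ with |λ| ≥ 1 if and only if C⁻¹(im D) ⊆ im P and rank [[R − λQP, QB],[CP, D]] = rank P + rank [[QB],[D]] for all λ ∈ ℂ with |λ| ≥ 1. -/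

import Mathlib

open Matrix

/-- Complexification of a real matrix. -/
noncomputable def cx {a b : ℕ} (M : Matrix (Fin a) (Fin b) ℝ) : Matrix (Fin a) (Fin b) ℂ :=
  M.map (algebraMap ℝ ℂ)

namespace RankAux

/-- Complexification for general index types. -/
noncomputable def cpx {ι κ : Type*} (M : Matrix ι κ ℝ) : Matrix ι κ ℂ :=
  M.map (algebraMap ℝ ℂ)

lemma cx_eq_cpx {a b : ℕ} (M : Matrix (Fin a) (Fin b) ℝ) : cx M = cpx M := rfl

noncomputable def mkv {ι : Type*} (v w : ι → ℝ) : ι → ℂ := fun i => ⟨v i, w i⟩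

noncomputable def cxv {ι : Type*} (v : ι → ℝ) : ι → ℂ := mkv v 0

def vre {ι : Type*} (v : ι → ℂ) : ι → ℝ := fun i => (v i).re
def vim {ι : Type*} (v : ι → ℂ) : ι → ℝ := fun i => (v i).im

@[simp] lemma mkv_re {ι : Type*} (v w : ι → ℝ) (i : ι) : (mkv v w i).re = v i := rfl
@[simp] lemma mkv_im {ι : Type*} (v w : ι → ℝ) (i : ι) : (mkv v w i).im = w i := rfl

lemma mkv_vre_vim {ι : Type*} (v : ι → ℂ) : mkv (vre v) (vim v) = v := by
  funext i; exact Complex.ext rfl rfl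

@[simp] lemma vre_mkv {ι : Type*} (v w : ι → ℝ) : vre (mkv v w) = v := rfl
@[simp] lemma vim_mkv {ι : Type*} (v w : ι → ℝ) : vim (mkv v w) = w := rfl

lemma mkv_eq_mkv {ι : Type*} {v w v' w' : ι → ℝ} :
    mkv v w = mkv v' w' ↔ v = v' ∧ w = w' := by
  constructor
  · intro h
    constructor <;> funext i <;>
      [exact congrArg Complex.re (congrFun h i); exact congrArg Complex.im (congrFun h i)]
  · rintro ⟨rfl, rfl⟩; rfl

lemma mkv_eq_zero {ι : Type*} {v w : ι → ℝ} : mkv v w = 0 ↔ v = 0 ∧ w = 0 := by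
  have : (0 : ι → ℂ) = mkv 0 0 := by funext i; exact (Complex.ext rfl rfl)
  rw [this, mkv_eq_mkv]

lemma cpx_mulVec_mkv {ι κ : Type*} [Fintype κ] (M : Matrix ι κ ℝ) (v w : κ → ℝ) :
    (cpx M) *ᵥ (mkv v w) = mkv (M *ᵥ v) (M *ᵥ w) := by
  funext i
  refine Complex.ext ?_ ?_
  · simp only [mulVec, dotProduct, cpx, map_apply, mkv_re, Complex.re_sum]
    refine Finset.sum_congr rfl fun j _ => ?_
    simp [Complex.mul_re]
  · simp only [mulVec, dotProduct, cpx, map_apply, mkv_im, Complex.im_sum]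
    refine Finset.sum_congr rfl fun j _ => ?_
    simp [Complex.mul_im]

lemma smul_mkv {ι : Type*} (z : ℂ) (v w : ι → ℝ) :
    z • mkv v w = mkv (z.re • v - z.im • w) (z.im • v + z.re • w) := by
  funext i
  refine Complex.ext ?_ ?_ <;> simp [Complex.mul_re, Complex.mul_im, mul_comm] <;> ring

lemma mkv_add {ι : Type*} (v w v' w' : ι → ℝ) :
    mkv v w + mkv v' w' = mkv (v + v') (w + w') := by
  funext i; refine Complex.ext ?_ ?_ <;> simp

lemma mkv_sub {ι : Type*} (v w v' w' : ι → ℝ) :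
    mkv v w - mkv v' w' = mkv (v - v') (w - w') := by
  funext i; refine Complex.ext ?_ ?_ <;> simp

lemma cpx_mul {ι κ σ : Type*} [Fintype κ] (M : Matrix ι κ ℝ) (N : Matrix κ σ ℝ) :
    cpx (M * N) = cpx M * cpx N := Matrix.map_mul

lemma cxv_apply {ι : Type*} (v : ι → ℝ) (i : ι) : cxv v i = (v i : ℂ) := by
  refine Complex.ext ?_ ?_ <;> simp [cxv, mkv]

lemma cxv_add {ι : Type*} (v w : ι → ℝ) : cxv (v + w) = cxv v + cxv w := by
  funext i; simp [cxv_apply]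

lemma cxv_smul {ι : Type*} (r : ℝ) (v : ι → ℝ) : cxv (r • v) = (r : ℂ) • cxv v := by
  funext i; simp [cxv_apply]

lemma cxv_eq_zero {ι : Type*} {v : ι → ℝ} : cxv v = 0 ↔ v = 0 := by
  rw [cxv, mkv_eq_zero]; tauto

lemma cxv_zero {ι : Type*} : cxv (0 : ι → ℝ) = 0 := cxv_eq_zero.mpr rfl

lemma cxv_sum {ι : Type*} {k : Type*} (s : Finset k) (f : k → (ι → ℝ)) :
    cxv (∑ i ∈ s, f i) = ∑ i ∈ s, cxv (f i) := by
  classical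
  induction s using Finset.induction_on with
  | empty => simp [cxv_zero]
  | insert _ _ hni ih => rw [Finset.sum_insert hni, Finset.sum_insert hni, cxv_add, ih]

lemma mkv_eq_add_smul {ι : Type*} (v w : ι → ℝ) :
    mkv v w = cxv v + Complex.I • cxv w := by
  funext i
  refine Complex.ext ?_ ?_ <;> simp [cxv_apply, mkv]

lemma sum_elim_eq_zero {α β γ : Type*} [Zero γ] {a : α → γ} {b : β → γ} :
    Sum.elim a b = (0 : α ⊕ β → γ) ↔ a = 0 ∧ b = 0 := by
  constructor
  · intro h
    exact ⟨funext fun i => congrFun h (Sum.inl i), funext fun i => congrFun h (Sum.inr i)⟩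
  · rintro ⟨rfl, rfl⟩; funext i; cases i <;> rfl

variable {K : Type*} [Field K]

lemma finrank_submodule_prod {V W : Type*} [AddCommGroup V] [Module K V]
    [AddCommGroup W] [Module K W] [FiniteDimensional K V] [FiniteDimensional K W]
    (p : Submodule K V) (q : Submodule K W) :
    Module.finrank K (p.prod q) = Module.finrank K p + Module.finrank K q := by
  rw [← Module.finrank_prod]
  refine LinearEquiv.finrank_eq ?_
  exact { toFun := fun x => (⟨x.1.1, x.2.1⟩, ⟨x.1.2, x.2.2⟩)
          invFun := fun x => ⟨(x.1.1, x.2.1), ⟨x.1.2, x.2.2⟩⟩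
          left_inv := fun x => rfl
          right_inv := fun x => rfl
          map_add' := fun x y => rfl
          map_smul' := fun c x => rfl }

set_option linter.unusedSectionVars false in
lemma rank_aux {κ τ ι σ ρ : Type*} [Fintype κ] [Fintype τ] [Fintype ι] [Fintype σ] [Fintype ρ]
    (P' : Matrix ι κ K) (X : Matrix σ κ K) (B' : Matrix σ τ K)
    (C' : Matrix ρ κ K) (D' : Matrix ρ τ K)
    (h1 : ∀ w, P' *ᵥ w = 0 → X *ᵥ w = 0)
    (h2 : ∀ w, P' *ᵥ w = 0 → C' *ᵥ w = 0) :
    (fromBlocks X B' C' D').rank = P'.rank + (fromRows B' D').rank ↔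
      ∀ (w : κ → K) (u : τ → K), X *ᵥ w + B' *ᵥ u = 0 → C' *ᵥ w + D' *ᵥ u = 0 →
        P' *ᵥ w = 0 := by
  classical
  set M := fromBlocks X B' C' D' with hM
  set g := fromRows B' D' with hg
  set Lin : ((κ ⊕ τ) → K) →ₗ[K] (κ → K) := LinearMap.funLeft K K Sum.inl with hLin
  set Rin : ((κ ⊕ τ) → K) →ₗ[K] (τ → K) := LinearMap.funLeft K K Sum.inr with hRin
  set pmap : ((κ ⊕ τ) → K) →ₗ[K] (ι → K) := P'.mulVecLin ∘ₗ Lin with hpmap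
  set gmap : ((κ ⊕ τ) → K) →ₗ[K] ((σ ⊕ ρ) → K) := g.mulVecLin ∘ₗ Rin with hgmap
  set Φ : ((κ ⊕ τ) → K) →ₗ[K] (ι → K) × ((σ ⊕ ρ) → K) := pmap.prod gmap with hΦ
  have hpv : ∀ v : (κ ⊕ τ) → K, pmap v = P' *ᵥ (v ∘ Sum.inl) := fun v => rfl
  have hgv : ∀ v : (κ ⊕ τ) → K, gmap v =
      Sum.elim (B' *ᵥ (v ∘ Sum.inr)) (D' *ᵥ (v ∘ Sum.inr)) := by
    intro v
    show g *ᵥ (v ∘ Sum.inr) = _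
    rw [hg, fromRows_mulVec]
  have hMv : ∀ v : (κ ⊕ τ) → K, M.mulVecLin v =
      Sum.elim (X *ᵥ (v ∘ Sum.inl) + B' *ᵥ (v ∘ Sum.inr))
        (C' *ᵥ (v ∘ Sum.inl) + D' *ᵥ (v ∘ Sum.inr)) := by
    intro v
    show M *ᵥ v = _
    rw [hM, fromBlocks_mulVec]
  have hkertop : LinearMap.ker pmap ⊔ LinearMap.ker gmap = ⊤ := by
    rw [eq_top_iff]
    intro v _
    rw [Submodule.mem_sup]
    refine ⟨Sum.elim 0 (v ∘ Sum.inr), ?_, Sum.elim (v ∘ Sum.inl) 0, ?_, ?_⟩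
    · rw [LinearMap.mem_ker, hpv]
      have : (Sum.elim (0 : κ → K) (v ∘ Sum.inr)) ∘ Sum.inl = 0 := by funext i; rfl
      rw [this, Matrix.mulVec_zero]
    · rw [LinearMap.mem_ker, hgv]
      have : (Sum.elim (v ∘ Sum.inl) (0 : τ → K)) ∘ Sum.inr = 0 := by funext i; rfl
      rw [this, Matrix.mulVec_zero, Matrix.mulVec_zero]
      exact sum_elim_eq_zero.mpr ⟨rfl, rfl⟩
    · funext i; cases i <;> simp
  have hrangeΦ : LinearMap.range Φ =
      (LinearMap.range P'.mulVecLin).prod (LinearMap.range g.mulVecLin) := by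
    rw [hΦ, LinearMap.range_prod_eq hkertop]
    congr 1
    · rw [hpmap, LinearMap.range_comp, LinearMap.range_eq_top.mpr, Submodule.map_top]
      intro w; exact ⟨Sum.elim w 0, rfl⟩
    · rw [hgmap, LinearMap.range_comp, LinearMap.range_eq_top.mpr, Submodule.map_top]
      intro u; exact ⟨Sum.elim 0 u, rfl⟩
  have hA : Module.finrank K (LinearMap.ker Φ) + (P'.rank + g.rank) =
      Fintype.card κ + Fintype.card τ := by
    have h' := LinearMap.finrank_range_add_finrank_ker Φ
    rw [Module.finrank_pi, Fintype.card_sum] at h'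
    have h'' : Module.finrank K (LinearMap.range Φ) = P'.rank + g.rank := by
      rw [hrangeΦ, finrank_submodule_prod]; rfl
    omega
  have hD : (M.rank : ℕ) + Module.finrank K (LinearMap.ker M.mulVecLin) =
      Fintype.card κ + Fintype.card τ := by
    have h' := LinearMap.finrank_range_add_finrank_ker M.mulVecLin
    rw [Module.finrank_pi, Fintype.card_sum] at h'
    exact h'
  have hmemS : ∀ v : (κ ⊕ τ) → K, v ∈ LinearMap.ker Φ ↔
      (P' *ᵥ (v ∘ Sum.inl) = 0 ∧ B' *ᵥ (v ∘ Sum.inr) = 0 ∧ D' *ᵥ (v ∘ Sum.inr) = 0) := by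
    intro v
    rw [LinearMap.mem_ker]
    have : Φ v = (pmap v, gmap v) := rfl
    rw [this, Prod.mk_eq_zero, hpv, hgv, sum_elim_eq_zero]
  have hmemK : ∀ v : (κ ⊕ τ) → K, v ∈ LinearMap.ker M.mulVecLin ↔
      (X *ᵥ (v ∘ Sum.inl) + B' *ᵥ (v ∘ Sum.inr) = 0 ∧
        C' *ᵥ (v ∘ Sum.inl) + D' *ᵥ (v ∘ Sum.inr) = 0) := by
    intro v
    rw [LinearMap.mem_ker, hMv, sum_elim_eq_zero]
  have hSK : LinearMap.ker Φ ≤ LinearMap.ker M.mulVecLin := by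
    intro v hv
    rw [hmemS] at hv
    rw [hmemK]
    obtain ⟨hp, hb, hd⟩ := hv
    rw [h1 _ hp, h2 _ hp, hb, hd, add_zero, add_zero]
    exact ⟨rfl, rfl⟩
  constructor
  · intro hrk w u e1 e2
    have hfr : Module.finrank K (LinearMap.ker M.mulVecLin) =
        Module.finrank K (LinearMap.ker Φ) := by
      rw [hrk] at hD; omega
    have heq : LinearMap.ker Φ = LinearMap.ker M.mulVecLin :=
      Submodule.eq_of_le_of_finrank_le hSK (le_of_eq hfr)
    have hv : Sum.elim w u ∈ LinearMap.ker M.mulVecLin := by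
      rw [hmemK]
      have hl : (Sum.elim w u) ∘ Sum.inl = w := by funext i; rfl
      have hr : (Sum.elim w u) ∘ Sum.inr = u := by funext i; rfl
      rw [hl, hr]; exact ⟨e1, e2⟩
    rw [← heq, hmemS] at hv
    have hl : (Sum.elim w u) ∘ Sum.inl = w := by funext i; rfl
    rw [hl] at hv
    exact hv.1
  · intro hcond
    have hKS : LinearMap.ker M.mulVecLin ≤ LinearMap.ker Φ := by
      intro v hv
      rw [hmemK] at hv
      rw [hmemS]
      obtain ⟨e1, e2⟩ := hv
      have hp : P' *ᵥ (v ∘ Sum.inl) = 0 := hcond _ _ e1 e2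
      have hx := h1 _ hp
      have hc := h2 _ hp
      rw [hx, zero_add] at e1
      rw [hc, zero_add] at e2
      exact ⟨hp, e1, e2⟩
    have heq : LinearMap.ker Φ = LinearMap.ker M.mulVecLin := le_antisymm hSK hKS
    rw [← heq] at hD
    omega

lemma rank_cpx {ι κ : Type*} [Fintype ι] [Fintype κ] (M : Matrix ι κ ℝ) :
    (cpx M).rank = M.rank := by
  classical
  set Kr := LinearMap.ker M.mulVecLin with hKr
  set Kc := LinearMap.ker (cpx M).mulVecLin with hKc
  have hcxmem : ∀ v : κ → ℝ, v ∈ Kr → cxv v ∈ Kc := by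
    intro v hv
    rw [hKc, LinearMap.mem_ker]
    show (cpx M) *ᵥ (mkv v 0) = 0
    rw [cpx_mulVec_mkv, Matrix.mulVec_zero]
    rw [LinearMap.mem_ker] at hv
    rw [show M *ᵥ v = 0 from hv]
    exact mkv_eq_zero.mpr ⟨rfl, rfl⟩
  let bb := Module.finBasis ℝ Kr
  set k := Module.finrank ℝ Kr with hk
  set F : Fin k → (κ → ℂ) := fun i => cxv ((bb i : κ → ℝ)) with hF
  have hFmem : ∀ i, F i ∈ Kc := fun i => hcxmem _ (bb i).2
  have hFindep : LinearIndependent ℂ F := by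
    rw [Fintype.linearIndependent_iff]
    intro c hc i
    have hreal : ∀ (g : Fin k → ℝ), (∑ i, g i • (bb i : κ → ℝ)) = 0 → ∀ i, g i = 0 := by
      have hind : LinearIndependent ℝ (fun i => (bb i : κ → ℝ)) := by
        have := bb.linearIndependent
        have h2 := this.map' Kr.subtype (Submodule.ker_subtype Kr)
        exact h2
      exact Fintype.linearIndependent_iff.mp hind
    have hcomp : ∀ j, (∑ i, c i * ((bb i : κ → ℝ) j : ℂ)) = 0 := by
      intro j
      have := congrFun hc j
      simpa [hF, cxv_apply, Finset.sum_apply] using this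
    have hre : ∀ i, (c i).re = 0 := by
      apply hreal
      funext j
      have := congrArg Complex.re (hcomp j)
      simpa [Complex.re_sum, Complex.mul_re] using this
    have him : ∀ i, (c i).im = 0 := by
      apply hreal
      funext j
      have := congrArg Complex.im (hcomp j)
      simpa [Complex.im_sum, Complex.mul_im] using this
    exact Complex.ext (hre i) (him i)
  have hspan : Submodule.span ℂ (Set.range F) = Kc := by
    apply le_antisymm
    · rw [Submodule.span_le]
      rintro _ ⟨i, rfl⟩
      exact hFmem i
    · intro z hz
      have hz1 : vre z ∈ Kr ∧ vim z ∈ Kr := by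
        rw [hKc, LinearMap.mem_ker] at hz
        have : (cpx M) *ᵥ z = 0 := hz
        rw [← mkv_vre_vim z, cpx_mulVec_mkv, mkv_eq_zero] at this
        exact ⟨this.1, this.2⟩
      have key : ∀ v : κ → ℝ, v ∈ Kr → cxv v ∈ Submodule.span ℂ (Set.range F) := by
        intro v hv
        have hrepr : (∑ i, bb.repr ⟨v, hv⟩ i • bb i : Kr) = ⟨v, hv⟩ := bb.sum_repr ⟨v, hv⟩
        have hv' : v = ∑ i, bb.repr ⟨v, hv⟩ i • (bb i : κ → ℝ) := by
          have := congrArg (Subtype.val) hrepr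
          simp only [Submodule.coe_sum, Submodule.coe_smul] at this
          exact this.symm
        rw [hv']
        have : cxv (∑ i, bb.repr ⟨v, hv⟩ i • (bb i : κ → ℝ))
            = ∑ i, ((bb.repr ⟨v, hv⟩ i : ℝ) : ℂ) • F i := by
          rw [cxv_sum]
          exact Finset.sum_congr rfl fun i _ => cxv_smul _ _
        rw [this]
        apply Submodule.sum_mem
        intro i _
        exact Submodule.smul_mem _ _ (Submodule.subset_span ⟨i, rfl⟩)
      rw [← mkv_vre_vim z, mkv_eq_add_smul]
      exact Submodule.add_mem _ (key _ hz1.1) (Submodule.smul_mem _ _ (key _ hz1.2))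
  have hnullc : Module.finrank ℂ Kc = k := by
    rw [← hspan, finrank_span_eq_card hFindep, Fintype.card_fin]
  have h1 := LinearMap.finrank_range_add_finrank_ker (cpx M).mulVecLin
  have h2 := LinearMap.finrank_range_add_finrank_ker M.mulVecLin
  rw [Module.finrank_pi, ← hKc, hnullc] at h1
  rw [Module.finrank_pi, ← hKr, ← hk] at h2
  have hcx : (cpx M).rank = Module.finrank ℂ (LinearMap.range (cpx M).mulVecLin) := rfl
  have hM : M.rank = Module.finrank ℝ (LinearMap.range M.mulVecLin) := rfl
  rw [hcx, hM]
  omega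


lemma exists_functional {d : ℕ} (W : Submodule ℝ (Fin d → ℝ)) {v : Fin d → ℝ} (hv : v ∉ W) :
    ∃ f : (Fin d → ℝ) →ₗ[ℝ] ℝ, (∀ y ∈ W, f y = 0) ∧ f v = 1 := by
  have hqv : W.mkQ v ≠ 0 := by
    rw [Submodule.mkQ_apply, Ne, Submodule.Quotient.mk_eq_zero]
    exact hv
  have : ¬ ∀ φ : Module.Dual ℝ ((Fin d → ℝ) ⧸ W), φ (W.mkQ v) = 0 := by
    rw [Module.forall_dual_apply_eq_zero_iff]
    exact hqv
  push_neg at this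
  obtain ⟨φ, hφ⟩ := this
  refine ⟨(φ (W.mkQ v))⁻¹ • (φ ∘ₗ W.mkQ), fun y hy => ?_, ?_⟩
  · simp [Submodule.mkQ_apply, (Submodule.Quotient.mk_eq_zero W).mpr hy]
  · simp only [LinearMap.smul_apply, LinearMap.coe_comp, Function.comp_apply, smul_eq_mul]
    exact inv_mul_cancel₀ hφ

lemma dot_single (d : ℕ) (f : (Fin d → ℝ) →ₗ[ℝ] ℝ) (y : Fin d → ℝ) :
    (fun j => f (fun i => if j = i then 1 else 0)) ⬝ᵥ y = f y := by
  rw [LinearMap.pi_apply_eq_sum_univ f y, dotProduct]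
  exact Finset.sum_congr rfl fun j _ => by rw [smul_eq_mul, mul_comm]

lemma vecMulVec_mulVec {a b : ℕ} (c : Fin a → ℝ) (f : Fin b → ℝ) (y : Fin b → ℝ) :
    (vecMulVec c f) *ᵥ y = (f ⬝ᵥ y) • c := by
  funext i
  simp only [mulVec, dotProduct, vecMulVec_apply, Pi.smul_apply, smul_eq_mul]
  rw [Finset.sum_mul]
  exact Finset.sum_congr rfl fun j _ => by ring

lemma mul_vecMulVec {a b e : ℕ} (Q : Matrix (Fin e) (Fin a) ℝ) (c : Fin a → ℝ)
    (f : Fin b → ℝ) : Q * vecMulVec c f = vecMulVec (Q *ᵥ c) f := by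
  ext i j
  simp only [mul_apply, vecMulVec_apply, mulVec, dotProduct]
  rw [Finset.sum_mul]
  exact Finset.sum_congr rfl fun k _ => by ring

lemma vecMulVec_zero_left {a b : ℕ} (f : Fin b → ℝ) :
    vecMulVec (0 : Fin a → ℝ) f = 0 := by
  ext i j; simp [vecMulVec_apply]

lemma matrix_eq_of_mulVecLin {a b : ℕ} {M N : Matrix (Fin a) (Fin b) ℝ}
    (h : M.mulVecLin = N.mulVecLin) : M = N := by
  have h' : Matrix.toLin' M = Matrix.toLin' N := by
    rw [Matrix.toLin'_apply', Matrix.toLin'_apply', h]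
  exact Matrix.toLin'.injective h'

lemma exists_A0 {n r l : ℕ} (P : Matrix (Fin n) (Fin r) ℝ) (Q : Matrix (Fin l) (Fin n) ℝ)
    (R : Matrix (Fin l) (Fin r) ℝ)
    (him : LinearMap.range R.mulVecLin ≤ LinearMap.range Q.mulVecLin)
    (hker : LinearMap.ker P.mulVecLin ≤ LinearMap.ker R.mulVecLin) :
    ∃ A₀ : Matrix (Fin n) (Fin n) ℝ, R = Q * A₀ * P := by
  classical
  set p := P.mulVecLin with hp
  set q := Q.mulVecLin with hq
  set rm := R.mulVecLin with hrm
  set ψ : ((Fin r → ℝ) ⧸ LinearMap.ker p) →ₗ[ℝ] (Fin l → ℝ) :=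
    Submodule.liftQ (LinearMap.ker p) rm hker with hψ
  set e := LinearMap.quotKerEquivRange p with he
  set r₀ : LinearMap.range p →ₗ[ℝ] (Fin l → ℝ) := ψ ∘ₗ (e.symm : _ →ₗ[ℝ] _) with hr₀
  have hr₀app : ∀ (x : Fin r → ℝ) (h : p x ∈ LinearMap.range p), r₀ ⟨p x, h⟩ = rm x := by
    intro x h
    have h1 : e (Submodule.Quotient.mk x) = ⟨p x, h⟩ := by
      rw [he]
      exact Subtype.ext (by simp [LinearMap.quotKerEquivRange_apply_mk])
    have h2 : e.symm ⟨p x, h⟩ = Submodule.Quotient.mk x := by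
      rw [← h1, LinearEquiv.symm_apply_apply]
    rw [hr₀]
    simp only [LinearMap.coe_comp, Function.comp_apply, LinearEquiv.coe_coe, h2]
    rw [hψ]
    exact Submodule.liftQ_apply _ _ _
  have hmemq : ∀ y : LinearMap.range p, r₀ y ∈ LinearMap.range q := by
    rintro ⟨y, hy⟩
    obtain ⟨x, hx⟩ := hy
    have : (⟨y, ⟨x, hx⟩⟩ : LinearMap.range p) = ⟨p x, LinearMap.mem_range_self p x⟩ :=
      Subtype.ext hx.symm
    rw [this, hr₀app]
    exact him (LinearMap.mem_range_self rm x)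
  set r₀' : LinearMap.range p →ₗ[ℝ] LinearMap.range q :=
    LinearMap.codRestrict (LinearMap.range q) r₀ hmemq with hr₀'
  obtain ⟨r₁, hr₁⟩ := LinearMap.exists_extend r₀'
  obtain ⟨am, ham⟩ := Module.projective_lifting_property q.rangeRestrict r₁
    (LinearMap.surjective_rangeRestrict q)
  refine ⟨LinearMap.toMatrix' am, ?_⟩
  apply matrix_eq_of_mulVecLin
  rw [Matrix.mulVecLin_mul, Matrix.mulVecLin_mul]
  have hA : (LinearMap.toMatrix' am).mulVecLin = am := by
    rw [← Matrix.toLin'_apply']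
    exact Matrix.toLin'_toMatrix' am
  rw [hA]
  apply LinearMap.ext
  intro x
  have h1 : q (am (p x)) = (q.rangeRestrict (am (p x)) : Fin l → ℝ) := rfl
  have h2 : q.rangeRestrict (am (p x)) = r₁ (p x) := by rw [← ham]; rfl
  have h3 : r₁ (p x) = r₁ ((LinearMap.range p).subtype ⟨p x, LinearMap.mem_range_self p x⟩) := rfl
  have h4 : r₁ ((LinearMap.range p).subtype ⟨p x, LinearMap.mem_range_self p x⟩)
      = r₀' ⟨p x, LinearMap.mem_range_self p x⟩ := by rw [← hr₁]; rfl
  show rm x = q (am (p x))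
  rw [h1, h2, h3, h4, hr₀']
  show rm x = r₀ ⟨p x, LinearMap.mem_range_self p x⟩
  exact (hr₀app x _).symm



/-- Build a matrix in the affine set with prescribed action on one vector. -/
lemma build1 {n r l : ℕ} {P : Matrix (Fin n) (Fin r) ℝ} {Q : Matrix (Fin l) (Fin n) ℝ}
    {R : Matrix (Fin l) (Fin r) ℝ} {A₀ : Matrix (Fin n) (Fin n) ℝ} (hA₀ : R = Q * A₀ * P)
    {x₁ v₁ : Fin n → ℝ} (hx₁ : x₁ ≠ 0) (hQ1 : Q *ᵥ (v₁ - A₀ *ᵥ x₁) = 0) :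
    ∃ A : Matrix (Fin n) (Fin n) ℝ, R = Q * A * P ∧ A *ᵥ x₁ = v₁ := by
  have hx₁' : x₁ ∉ (⊥ : Submodule ℝ (Fin n → ℝ)) := by
    rw [Submodule.mem_bot]; exact hx₁
  obtain ⟨f, -, hf1⟩ := exists_functional ⊥ hx₁'
  set fv : Fin n → ℝ := fun j => f (fun i => if j = i then 1 else 0) with hfv
  refine ⟨A₀ + vecMulVec (v₁ - A₀ *ᵥ x₁) fv, ?_, ?_⟩
  · rw [Matrix.mul_add, Matrix.add_mul, mul_vecMulVec, hQ1, vecMulVec_zero_left,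
      Matrix.zero_mul, add_zero, hA₀]
  · rw [Matrix.add_mulVec, vecMulVec_mulVec, hfv, dot_single, hf1, one_smul]
    abel

/-- Build a matrix in the affine set with prescribed action on two vectors with dual pair. -/
lemma build2 {n r l : ℕ} {P : Matrix (Fin n) (Fin r) ℝ} {Q : Matrix (Fin l) (Fin n) ℝ}
    {R : Matrix (Fin l) (Fin r) ℝ} {A₀ : Matrix (Fin n) (Fin n) ℝ} (hA₀ : R = Q * A₀ * P)
    {x₁ x₂ v₁ v₂ : Fin n → ℝ}
    (f₁ f₂ : (Fin n → ℝ) →ₗ[ℝ] ℝ)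
    (h11 : f₁ x₁ = 1) (h12 : f₁ x₂ = 0) (h21 : f₂ x₁ = 0) (h22 : f₂ x₂ = 1)
    (hQ1 : Q *ᵥ (v₁ - A₀ *ᵥ x₁) = 0) (hQ2 : Q *ᵥ (v₂ - A₀ *ᵥ x₂) = 0) :
    ∃ A : Matrix (Fin n) (Fin n) ℝ, R = Q * A * P ∧ A *ᵥ x₁ = v₁ ∧ A *ᵥ x₂ = v₂ := by
  set fv₁ : Fin n → ℝ := fun j => f₁ (fun i => if j = i then 1 else 0) with hfv₁
  set fv₂ : Fin n → ℝ := fun j => f₂ (fun i => if j = i then 1 else 0) with hfv₂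
  refine ⟨A₀ + vecMulVec (v₁ - A₀ *ᵥ x₁) fv₁ + vecMulVec (v₂ - A₀ *ᵥ x₂) fv₂, ?_, ?_, ?_⟩
  · rw [Matrix.mul_add, Matrix.mul_add, Matrix.add_mul, Matrix.add_mul, mul_vecMulVec,
      mul_vecMulVec, hQ1, hQ2, vecMulVec_zero_left, vecMulVec_zero_left,
      Matrix.zero_mul, add_zero, add_zero, hA₀]
  · rw [Matrix.add_mulVec, Matrix.add_mulVec, vecMulVec_mulVec, vecMulVec_mulVec,
      hfv₁, hfv₂, dot_single, dot_single, h11, h21, one_smul, zero_smul, add_zero]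
    abel
  · rw [Matrix.add_mulVec, Matrix.add_mulVec, vecMulVec_mulVec, vecMulVec_mulVec,
      hfv₁, hfv₂, dot_single, dot_single, h12, h22, one_smul, zero_smul, add_zero]
    abel



lemma cpx_one {n : ℕ} : cpx (1 : Matrix (Fin n) (Fin n) ℝ) = 1 :=
  Matrix.map_one _ (map_zero _) (map_one _)

lemma pencil_apply {a b c : ℕ} (X Y : Matrix (Fin a) (Fin b) ℝ) (Z : Matrix (Fin a) (Fin c) ℝ)
    (lam : ℂ) (w₁ w₂ : Fin b → ℝ) (u₁ u₂ : Fin c → ℝ) :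
    (cpx X - lam • cpx Y) *ᵥ mkv w₁ w₂ + cpx Z *ᵥ mkv u₁ u₂ =
      mkv (X *ᵥ w₁ - (lam.re • (Y *ᵥ w₁) - lam.im • (Y *ᵥ w₂)) + Z *ᵥ u₁)
          (X *ᵥ w₂ - (lam.im • (Y *ᵥ w₁) + lam.re • (Y *ᵥ w₂)) + Z *ᵥ u₂) := by
  rw [Matrix.sub_mulVec, Matrix.smul_mulVec, cpx_mulVec_mkv, cpx_mulVec_mkv,
    cpx_mulVec_mkv, smul_mkv, mkv_sub, mkv_add]

lemma out_apply {a b c : ℕ} (C' : Matrix (Fin a) (Fin b) ℝ) (D' : Matrix (Fin a) (Fin c) ℝ)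
    (x₁ x₂ : Fin b → ℝ) (u₁ u₂ : Fin c → ℝ) :
    cpx C' *ᵥ mkv x₁ x₂ + cpx D' *ᵥ mkv u₁ u₂ =
      mkv (C' *ᵥ x₁ + D' *ᵥ u₁) (C' *ᵥ x₂ + D' *ᵥ u₂) := by
  rw [cpx_mulVec_mkv, cpx_mulVec_mkv, mkv_add]

variable {n r l m p : ℕ} {P : Matrix (Fin n) (Fin r) ℝ} {Q : Matrix (Fin l) (Fin n) ℝ}
  {R : Matrix (Fin l) (Fin r) ℝ} {B : Matrix (Fin n) (Fin m) ℝ} {C : Matrix (Fin p) (Fin n) ℝ}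
  {D : Matrix (Fin p) (Fin m) ℝ}

lemma small_decomp {lam : ℂ} {w : Fin r → ℂ} {u : Fin m → ℂ}
    (e1 : (cx R - lam • (cx Q * cx P)) *ᵥ w + (cx Q * cx B) *ᵥ u = 0)
    (e2 : (cx C * cx P) *ᵥ w + cx D *ᵥ u = 0) :
    (R *ᵥ vre w - (lam.re • ((Q*P) *ᵥ vre w) - lam.im • ((Q*P) *ᵥ vim w)) + (Q*B) *ᵥ vre u = 0)
    ∧ (R *ᵥ vim w - (lam.im • ((Q*P) *ᵥ vre w) + lam.re • ((Q*P) *ᵥ vim w)) + (Q*B) *ᵥ vim u = 0)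
    ∧ ((C*P) *ᵥ vre w + D *ᵥ vre u = 0) ∧ ((C*P) *ᵥ vim w + D *ᵥ vim u = 0) := by
  have hQP : cx Q * cx P = cpx (Q * P) := (cpx_mul Q P).symm
  have hQB : cx Q * cx B = cpx (Q * B) := (cpx_mul Q B).symm
  have hCP : cx C * cx P = cpx (C * P) := (cpx_mul C P).symm
  rw [hQP, hQB, cx_eq_cpx] at e1
  rw [hCP, cx_eq_cpx] at e2
  rw [← mkv_vre_vim w, ← mkv_vre_vim u] at e1 e2
  rw [pencil_apply, mkv_eq_zero] at e1
  rw [out_apply, mkv_eq_zero] at e2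
  exact ⟨e1.1, e1.2, e2.1, e2.2⟩

lemma realwit (hker : LinearMap.ker P.mulVecLin ≤ LinearMap.ker R.mulVecLin)
    {S : Set ℂ} (hS1 : (1:ℂ) ∈ S) {A₀ : Matrix (Fin n) (Fin n) ℝ} (hA₀ : R = Q * A₀ * P)
    (hbig : ∀ A : Matrix (Fin n) (Fin n) ℝ, R = Q * A * P → ∀ lam ∈ S,
      ∀ (x : Fin n → ℂ) (uu : Fin m → ℂ), (cx A - lam • 1) *ᵥ x + cx B *ᵥ uu = 0 →
        cx C *ᵥ x + cx D *ᵥ uu = 0 → x = 0)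
    {lam : ℂ} (hlam : lam ∈ S) {w : Fin r → ℂ} {u : Fin m → ℂ}
    (e1 : (cx R - lam • (cx Q * cx P)) *ᵥ w + (cx Q * cx B) *ᵥ u = 0)
    (e2 : (cx C * cx P) *ᵥ w + cx D *ᵥ u = 0)
    (hxim : P *ᵥ vim w = 0) (hxre : P *ᵥ vre w ≠ 0) : False := by
  obtain ⟨E1, E2, E3, E4⟩ := small_decomp e1 e2
  set w₁ := vre w with hw₁d
  set w₂ := vim w with hw₂d
  set u₁ := vre u with hu₁d
  set u₂ := vim u with hu₂d
  set a := lam.re with had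
  set b := lam.im with hbd
  obtain ⟨x₁, hx₁d⟩ : ∃ z, P *ᵥ w₁ = z := ⟨_, rfl⟩
  rw [hx₁d] at hxre
  have hQPw₂ : (Q*P) *ᵥ w₂ = 0 := by
    rw [← Matrix.mulVec_mulVec, hxim, Matrix.mulVec_zero]
  have hQPw₁ : (Q*P) *ᵥ w₁ = Q *ᵥ x₁ := by rw [← Matrix.mulVec_mulVec, hx₁d]
  have hRw₂ : R *ᵥ w₂ = 0 := by
    have h0 : w₂ ∈ LinearMap.ker P.mulVecLin := by
      rw [LinearMap.mem_ker, Matrix.mulVecLin_apply]; exact hxim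
    have := hker h0
    rwa [LinearMap.mem_ker, Matrix.mulVecLin_apply] at this
  rw [hQPw₂, hQPw₁, smul_zero, sub_zero] at E1
  rw [hQPw₂, hQPw₁, smul_zero, add_zero, hRw₂] at E2
  have hQBu₂ : (Q*B) *ᵥ u₂ = b • (Q *ᵥ x₁) := by
    refine eq_of_sub_eq_zero ?_
    rw [show (Q*B) *ᵥ u₂ - b • (Q *ᵥ x₁) = 0 - b • (Q *ᵥ x₁) + (Q*B) *ᵥ u₂ from by abel]
    exact E2
  have hDu₂ : D *ᵥ u₂ = 0 := by
    have h4 := E4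
    rw [← Matrix.mulVec_mulVec, hxim, Matrix.mulVec_zero, zero_add] at h4
    exact h4
  have hRw₁ : R *ᵥ w₁ = a • (Q *ᵥ x₁) - (Q*B) *ᵥ u₁ := by
    refine eq_of_sub_eq_zero ?_
    rw [show R *ᵥ w₁ - (a • (Q *ᵥ x₁) - (Q*B) *ᵥ u₁)
        = R *ᵥ w₁ - a • (Q *ᵥ x₁) + (Q*B) *ᵥ u₁ from by abel]
    exact E1
  have hCx₁ : C *ᵥ x₁ + D *ᵥ u₁ = 0 := by
    rw [← hx₁d, Matrix.mulVec_mulVec]; exact E3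
  obtain ⟨μ₀, t, hμS, hkey⟩ : ∃ (μ₀ t : ℝ), ((μ₀ : ℝ) : ℂ) ∈ S ∧ μ₀ - t * b - a = 0 := by
    by_cases hb : b = 0
    · refine ⟨a, 0, ?_, by rw [hb]; ring⟩
      have hl : ((a : ℝ) : ℂ) = lam := by
        refine Complex.ext ?_ ?_
        · rw [Complex.ofReal_re]
        · rw [Complex.ofReal_im]; exact hb.symm
      rwa [hl]
    · exact ⟨1, (1-a)/b, by rwa [Complex.ofReal_one], by field_simp; ring⟩
  obtain ⟨u'', hu''⟩ : ∃ z, u₁ + t • u₂ = z := ⟨_, rfl⟩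
  obtain ⟨v, hv⟩ : ∃ z, μ₀ • x₁ - B *ᵥ u'' = z := ⟨_, rfl⟩
  have hQA₀ : Q *ᵥ (A₀ *ᵥ x₁) = R *ᵥ w₁ := by
    rw [← hx₁d, Matrix.mulVec_mulVec, Matrix.mulVec_mulVec, ← hA₀]
  have hQBu'' : (Q*B) *ᵥ u'' = (Q*B) *ᵥ u₁ + (t*b) • (Q *ᵥ x₁) := by
    rw [← hu'', Matrix.mulVec_add, Matrix.mulVec_smul, hQBu₂, smul_smul]
  have hQv : Q *ᵥ (v - A₀ *ᵥ x₁) = 0 := by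
    have h1 : Q *ᵥ v = μ₀ • (Q *ᵥ x₁) - ((Q*B) *ᵥ u₁ + (t*b) • (Q *ᵥ x₁)) := by
      rw [← hv, Matrix.mulVec_sub, Matrix.mulVec_smul, Matrix.mulVec_mulVec, hQBu'']
    rw [Matrix.mulVec_sub, h1, hQA₀, hRw₁]
    rw [show μ₀ • (Q *ᵥ x₁) - ((Q*B) *ᵥ u₁ + (t*b) • (Q *ᵥ x₁))
        - (a • (Q *ᵥ x₁) - (Q*B) *ᵥ u₁) = (μ₀ - t*b - a) • (Q *ᵥ x₁) from by
      rw [sub_smul, sub_smul]; abel]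
    rw [hkey, zero_smul]
  obtain ⟨A, hA, hAx⟩ := build1 hA₀ hxre hQv
  have hDu'' : D *ᵥ u'' = D *ᵥ u₁ := by
    rw [← hu'', Matrix.mulVec_add, Matrix.mulVec_smul, hDu₂, smul_zero, add_zero]
  have he1 : (cx A - ((μ₀ : ℝ) : ℂ) • 1) *ᵥ cxv x₁ + cx B *ᵥ cxv u'' = 0 := by
    rw [cx_eq_cpx, cx_eq_cpx, ← cpx_one, show cxv x₁ = mkv x₁ 0 from rfl,
      show cxv u'' = mkv u'' 0 from rfl, pencil_apply, Complex.ofReal_re, Complex.ofReal_im,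
      mkv_eq_zero]
    constructor
    · simp only [Matrix.one_mulVec, Matrix.mulVec_zero, zero_smul, smul_zero, sub_zero]
      rw [hAx, ← hv]
      abel
    · simp
  have he2 : cx C *ᵥ cxv x₁ + cx D *ᵥ cxv u'' = 0 := by
    rw [cx_eq_cpx, cx_eq_cpx, show cxv x₁ = mkv x₁ 0 from rfl,
      show cxv u'' = mkv u'' 0 from rfl, out_apply]
    rw [Matrix.mulVec_zero, Matrix.mulVec_zero, add_zero, mkv_eq_zero]
    refine ⟨?_, rfl⟩
    rw [← hu'', Matrix.mulVec_add, Matrix.mulVec_smul, hDu₂, smul_zero, add_zero]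
    exact hCx₁
  have := hbig A hA _ hμS (cxv x₁) (cxv u'') he1 he2
  exact hxre (cxv_eq_zero.mp this)

lemma bigiff (A : Matrix (Fin n) (Fin n) ℝ) (lam : ℂ) :
    (fromBlocks (cx A - lam • 1) (cx B) (cx C) (cx D)).rank = n + (fromRows B D).rank ↔
      ∀ (x : Fin n → ℂ) (uu : Fin m → ℂ), (cx A - lam • 1) *ᵥ x + cx B *ᵥ uu = 0 →
        cx C *ᵥ x + cx D *ᵥ uu = 0 → x = 0 := by
  have h1 : ∀ x : Fin n → ℂ, (1 : Matrix (Fin n) (Fin n) ℂ) *ᵥ x = 0 →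
      (cx A - lam • 1) *ᵥ x = 0 := by
    intro x hx
    rw [Matrix.one_mulVec] at hx
    rw [hx, Matrix.mulVec_zero]
  have h2 : ∀ x : Fin n → ℂ, (1 : Matrix (Fin n) (Fin n) ℂ) *ᵥ x = 0 → cx C *ᵥ x = 0 := by
    intro x hx
    rw [Matrix.one_mulVec] at hx
    rw [hx, Matrix.mulVec_zero]
  have h := rank_aux (1 : Matrix (Fin n) (Fin n) ℂ) (cx A - lam • 1) (cx B) (cx C) (cx D) h1 h2
  rw [Matrix.rank_one, Fintype.card_fin] at h
  have hfr : fromRows (cx B) (cx D) = cpx (fromRows B D) := by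
    ext i j; cases i <;> rfl
  rw [hfr, rank_cpx] at h
  simp only [Matrix.one_mulVec] at h
  exact h

lemma smalliff (hker : LinearMap.ker P.mulVecLin ≤ LinearMap.ker R.mulVecLin) (lam : ℂ) :
    (fromBlocks (cx R - lam • (cx Q * cx P)) (cx Q * cx B) (cx C * cx P) (cx D)).rank
        = P.rank + (fromRows (Q * B) D).rank ↔
      ∀ (w : Fin r → ℂ) (u : Fin m → ℂ),
        (cx R - lam • (cx Q * cx P)) *ᵥ w + (cx Q * cx B) *ᵥ u = 0 →
        (cx C * cx P) *ᵥ w + cx D *ᵥ u = 0 → cx P *ᵥ w = 0 := by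
  have h1 : ∀ w : Fin r → ℂ, cx P *ᵥ w = 0 → (cx R - lam • (cx Q * cx P)) *ᵥ w = 0 := by
    intro w hw
    have hw' : cpx P *ᵥ mkv (vre w) (vim w) = 0 := by rw [mkv_vre_vim]; exact hw
    rw [cpx_mulVec_mkv, mkv_eq_zero] at hw'
    have hR1 : R *ᵥ vre w = 0 := by
      have h0 : vre w ∈ LinearMap.ker P.mulVecLin := by
        rw [LinearMap.mem_ker, Matrix.mulVecLin_apply]; exact hw'.1
      have := hker h0
      rwa [LinearMap.mem_ker, Matrix.mulVecLin_apply] at this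
    have hR2 : R *ᵥ vim w = 0 := by
      have h0 : vim w ∈ LinearMap.ker P.mulVecLin := by
        rw [LinearMap.mem_ker, Matrix.mulVecLin_apply]; exact hw'.2
      have := hker h0
      rwa [LinearMap.mem_ker, Matrix.mulVecLin_apply] at this
    have hRw : cx R *ᵥ w = 0 := by
      have : cpx R *ᵥ mkv (vre w) (vim w) = 0 := by
        rw [cpx_mulVec_mkv, hR1, hR2]
        exact mkv_eq_zero.mpr ⟨rfl, rfl⟩
      rwa [mkv_vre_vim] at this
    have hQPw : (cx Q * cx P) *ᵥ w = 0 := by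
      rw [← Matrix.mulVec_mulVec, hw, Matrix.mulVec_zero]
    rw [Matrix.sub_mulVec, Matrix.smul_mulVec, hRw, hQPw, smul_zero, sub_zero]
  have h2 : ∀ w : Fin r → ℂ, cx P *ᵥ w = 0 → (cx C * cx P) *ᵥ w = 0 := by
    intro w hw
    rw [← Matrix.mulVec_mulVec, hw, Matrix.mulVec_zero]
  have h := rank_aux (cx P) (cx R - lam • (cx Q * cx P)) (cx Q * cx B) (cx C * cx P) (cx D) h1 h2
  have hPrk : (cx P).rank = P.rank := rank_cpx P
  have hfr : fromRows (cx Q * cx B) (cx D) = cpx (fromRows (Q*B) D) := by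
    rw [show cx Q * cx B = cx (Q*B) from ((cpx_mul Q B).symm : _)]
    ext i j; cases i <;> rfl
  rw [hPrk, hfr, rank_cpx] at h
  exact h

theorem mainS
    (him : LinearMap.range R.mulVecLin ≤ LinearMap.range Q.mulVecLin)
    (hker : LinearMap.ker P.mulVecLin ≤ LinearMap.ker R.mulVecLin)
    (S : Set ℂ) (hS : (1:ℂ) ∈ S) :
    (∀ A : Matrix (Fin n) (Fin n) ℝ, R = Q * A * P → ∀ lam ∈ S,
        (fromBlocks (cx A - lam • 1) (cx B) (cx C) (cx D)).rank = n + (fromRows B D).rank) ↔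
      ((LinearMap.range D.mulVecLin).comap C.mulVecLin ≤ LinearMap.range P.mulVecLin ∧
        ∀ lam ∈ S,
          (fromBlocks (cx R - lam • (cx Q * cx P)) (cx Q * cx B) (cx C * cx P) (cx D)).rank
            = P.rank + (fromRows (Q * B) D).rank) := by
  constructor
  · intro h
    have hbig' : ∀ A : Matrix (Fin n) (Fin n) ℝ, R = Q * A * P → ∀ lam ∈ S,
        ∀ (x : Fin n → ℂ) (uu : Fin m → ℂ), (cx A - lam • 1) *ᵥ x + cx B *ᵥ uu = 0 →
          cx C *ᵥ x + cx D *ᵥ uu = 0 → x = 0 :=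
      fun A hA lam hl => (bigiff A lam).mp (h A hA lam hl)
    obtain ⟨A₀, hA₀⟩ := exists_A0 P Q R him hker
    constructor
    · -- the geometric condition
      intro xh hxh
      by_contra hnot
      obtain ⟨f, hf0, hf1⟩ := exists_functional _ hnot
      obtain ⟨u₀, hu₀⟩ := hxh
      rw [Matrix.mulVecLin_apply, Matrix.mulVecLin_apply] at hu₀
      have hCD : C *ᵥ xh + D *ᵥ (-u₀) = 0 := by
        rw [Matrix.mulVec_neg, hu₀]; abel
      obtain ⟨d, hd⟩ : ∃ z, xh - B *ᵥ (-u₀) - A₀ *ᵥ xh = z := ⟨_, rfl⟩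
      set fv : Fin n → ℝ := fun j => f (fun i => if j = i then 1 else 0) with hfvd
      have hΔP : vecMulVec d fv * P = 0 := by
        ext i k
        rw [Matrix.mul_apply]
        have hcol : (fun j => P j k) ∈ LinearMap.range P.mulVecLin := by
          refine ⟨Pi.single k 1, ?_⟩
          rw [Matrix.mulVecLin_apply, Matrix.mulVec_single_one]
          rfl
        have hsum : ∑ j, vecMulVec d fv i j * P j k = d i * (fv ⬝ᵥ (fun j => P j k)) := by
          rw [dotProduct, Finset.mul_sum]
          refine Finset.sum_congr rfl fun j _ => ?_
          rw [Matrix.vecMulVec_apply]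
          ring
        rw [hsum, hfvd, dot_single, hf0 _ hcol, mul_zero]
        rfl
      have hA : R = Q * (A₀ + vecMulVec d fv) * P := by
        rw [Matrix.mul_add, Matrix.add_mul, Matrix.mul_assoc Q (vecMulVec d fv) P, hΔP,
          Matrix.mul_zero, add_zero, ← hA₀]
      have hAx : (A₀ + vecMulVec d fv) *ᵥ xh = xh - B *ᵥ (-u₀) := by
        rw [Matrix.add_mulVec, vecMulVec_mulVec, hfvd, dot_single, hf1, one_smul, ← hd]
        abel
      have he1 : (cx (A₀ + vecMulVec d fv) - (1:ℂ) • 1) *ᵥ cxv xh + cx B *ᵥ cxv (-u₀) = 0 := by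
        rw [cx_eq_cpx, cx_eq_cpx, ← cpx_one, show cxv xh = mkv xh 0 from rfl,
          show cxv (-u₀) = mkv (-u₀) 0 from rfl, pencil_apply, Complex.one_re, Complex.one_im,
          mkv_eq_zero]
        constructor
        · simp only [Matrix.one_mulVec, Matrix.mulVec_zero, zero_smul, smul_zero, sub_zero,
            one_smul]
          rw [hAx]
          abel
        · simp
      have he2 : cx C *ᵥ cxv xh + cx D *ᵥ cxv (-u₀) = 0 := by
        rw [cx_eq_cpx, cx_eq_cpx, show cxv xh = mkv xh 0 from rfl,
          show cxv (-u₀) = mkv (-u₀) 0 from rfl, out_apply, Matrix.mulVec_zero,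
          Matrix.mulVec_zero, add_zero, mkv_eq_zero]
        exact ⟨hCD, rfl⟩
      have hx0 := hbig' _ hA 1 hS (cxv xh) (cxv (-u₀)) he1 he2
      have : xh = 0 := cxv_eq_zero.mp hx0
      exact hnot (this ▸ Submodule.zero_mem _)
    · -- the rank condition on the reduced pencil
      intro lam hlam
      rw [smalliff hker lam]
      intro w u e1 e2
      by_contra hx
      have hbigker := hbig'
      -- real and imaginary parts of x
      obtain ⟨x₁, hx₁d⟩ : ∃ z, P *ᵥ vre w = z := ⟨_, rfl⟩
      obtain ⟨x₂, hx₂d⟩ : ∃ z, P *ᵥ vim w = z := ⟨_, rfl⟩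
      have hxmk : cx P *ᵥ w = mkv x₁ x₂ := by
        have : cpx P *ᵥ mkv (vre w) (vim w) = mkv x₁ x₂ := by
          rw [cpx_mulVec_mkv, hx₁d, hx₂d]
        rwa [mkv_vre_vim] at this
      have hxne : ¬ (x₁ = 0 ∧ x₂ = 0) := by
        rintro ⟨h1, h2⟩
        exact hx (by rw [hxmk, h1, h2]; exact mkv_eq_zero.mpr ⟨rfl, rfl⟩)
      -- rescaled witnesses
      have hwitγ : ∀ γ : ℂ,
          ((cx R - lam • (cx Q * cx P)) *ᵥ (γ • w) + (cx Q * cx B) *ᵥ (γ • u) = 0) ∧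
          ((cx C * cx P) *ᵥ (γ • w) + cx D *ᵥ (γ • u) = 0) := by
        intro γ
        constructor
        · rw [Matrix.mulVec_smul, Matrix.mulVec_smul, ← smul_add, e1, smul_zero]
        · rw [Matrix.mulVec_smul, Matrix.mulVec_smul, ← smul_add, e2, smul_zero]
      have hPγ : ∀ γ : ℂ, cx P *ᵥ (γ • w) = γ • mkv x₁ x₂ := by
        intro γ
        rw [Matrix.mulVec_smul, hxmk]
      by_cases hA1 : x₁ = 0
      · -- rotate by -I
        have hx₂ne : x₂ ≠ 0 := fun h => hxne ⟨hA1, h⟩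
        have hval : cx P *ᵥ ((-Complex.I) • w) = mkv x₂ 0 := by
          rw [hPγ, hA1, smul_mkv, mkv_eq_mkv]
          constructor
          · simp
          · simp
        refine realwit hker hS hA₀ hbig' hlam (hwitγ (-Complex.I)).1 (hwitγ (-Complex.I)).2 ?_ ?_
        · show P *ᵥ vim ((-Complex.I) • w) = 0
          have : cpx P *ᵥ mkv (vre ((-Complex.I) • w)) (vim ((-Complex.I) • w)) = mkv x₂ 0 := by
            rw [mkv_vre_vim]; exact hval
          rw [cpx_mulVec_mkv, mkv_eq_mkv] at this
          exact this.2
        · show P *ᵥ vre ((-Complex.I) • w) ≠ 0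
          have : cpx P *ᵥ mkv (vre ((-Complex.I) • w)) (vim ((-Complex.I) • w)) = mkv x₂ 0 := by
            rw [mkv_vre_vim]; exact hval
          rw [cpx_mulVec_mkv, mkv_eq_mkv] at this
          rw [this.1]; exact hx₂ne
      · by_cases hsp : x₂ ∈ Submodule.span ℝ {x₁}
        · -- dependent case: rotate by (1 + t I)⁻¹
          obtain ⟨t, ht⟩ := Submodule.mem_span_singleton.mp hsp
          set z : ℂ := 1 + (t : ℂ) * Complex.I with hzd
          have hz0 : z ≠ 0 := by
            intro h
            have := congrArg Complex.re h
            simp [hzd] at this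
          have hzsm : z • mkv x₁ 0 = mkv x₁ x₂ := by
            rw [smul_mkv, mkv_eq_mkv]
            have hre : z.re = 1 := by simp [hzd]
            have him : z.im = t := by simp [hzd]
            constructor
            · rw [hre, him]; simp
            · rw [hre, him]; simp [ht]
          have hval : cx P *ᵥ (z⁻¹ • w) = mkv x₁ 0 := by
            rw [hPγ, ← hzsm, smul_smul, inv_mul_cancel₀ hz0, one_smul]
          refine realwit hker hS hA₀ hbig' hlam (hwitγ z⁻¹).1 (hwitγ z⁻¹).2 ?_ ?_
          · show P *ᵥ vim (z⁻¹ • w) = 0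
            have h5 : cpx P *ᵥ mkv (vre (z⁻¹ • w)) (vim (z⁻¹ • w)) = mkv x₁ 0 := by
              rw [mkv_vre_vim]; exact hval
            rw [cpx_mulVec_mkv, mkv_eq_mkv] at h5
            exact h5.2
          · show P *ᵥ vre (z⁻¹ • w) ≠ 0
            have h5 : cpx P *ᵥ mkv (vre (z⁻¹ • w)) (vim (z⁻¹ • w)) = mkv x₁ 0 := by
              rw [mkv_vre_vim]; exact hval
            rw [cpx_mulVec_mkv, mkv_eq_mkv] at h5
            rw [h5.1]; exact hA1
        · -- independent case
          obtain ⟨f₂, hf₂0, hf₂1⟩ := exists_functional _ hsp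
          have hx1notin : x₁ ∉ Submodule.span ℝ {x₂} := by
            intro hmem
            obtain ⟨s, hs⟩ := Submodule.mem_span_singleton.mp hmem
            have hs0 : s ≠ 0 := by
              intro h; rw [h, zero_smul] at hs; exact hA1 hs.symm
            refine hsp (Submodule.mem_span_singleton.mpr ⟨s⁻¹, ?_⟩)
            rw [← hs, smul_smul, inv_mul_cancel₀ hs0, one_smul]
          obtain ⟨f₁, hf₁0, hf₁1⟩ := exists_functional _ hx1notin
          obtain ⟨E1, E2, E3, E4⟩ := small_decomp e1 e2
          have hQP1 : (Q*P) *ᵥ vre w = Q *ᵥ x₁ := by rw [← Matrix.mulVec_mulVec, hx₁d]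
          have hQP2 : (Q*P) *ᵥ vim w = Q *ᵥ x₂ := by rw [← Matrix.mulVec_mulVec, hx₂d]
          have hCP1 : (C*P) *ᵥ vre w = C *ᵥ x₁ := by rw [← Matrix.mulVec_mulVec, hx₁d]
          have hCP2 : (C*P) *ᵥ vim w = C *ᵥ x₂ := by rw [← Matrix.mulVec_mulVec, hx₂d]
          rw [hQP1, hQP2] at E1 E2
          rw [hCP1] at E3
          rw [hCP2] at E4
          have hQA₁ : Q *ᵥ (A₀ *ᵥ x₁) = R *ᵥ vre w := by
            rw [← hx₁d, Matrix.mulVec_mulVec, Matrix.mulVec_mulVec, ← hA₀]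
          have hQA₂ : Q *ᵥ (A₀ *ᵥ x₂) = R *ᵥ vim w := by
            rw [← hx₂d, Matrix.mulVec_mulVec, Matrix.mulVec_mulVec, ← hA₀]
          obtain ⟨v₁, hv₁⟩ : ∃ zz, lam.re • x₁ - lam.im • x₂ - B *ᵥ vre u = zz := ⟨_, rfl⟩
          obtain ⟨v₂, hv₂⟩ : ∃ zz, lam.im • x₁ + lam.re • x₂ - B *ᵥ vim u = zz := ⟨_, rfl⟩
          have hQ1 : Q *ᵥ (v₁ - A₀ *ᵥ x₁) = 0 := by
            rw [Matrix.mulVec_sub, hQA₁, ← hv₁, Matrix.mulVec_sub, Matrix.mulVec_sub,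
              Matrix.mulVec_smul, Matrix.mulVec_smul, Matrix.mulVec_mulVec]
            rw [show lam.re • (Q *ᵥ x₁) - lam.im • (Q *ᵥ x₂) - (Q * B) *ᵥ vre u - R *ᵥ vre w
                = -(R *ᵥ vre w - (lam.re • (Q *ᵥ x₁) - lam.im • (Q *ᵥ x₂)) + (Q * B) *ᵥ vre u)
              from by abel, E1, neg_zero]
          have hQ2 : Q *ᵥ (v₂ - A₀ *ᵥ x₂) = 0 := by
            rw [Matrix.mulVec_sub, hQA₂, ← hv₂, Matrix.mulVec_sub, Matrix.mulVec_add,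
              Matrix.mulVec_smul, Matrix.mulVec_smul, Matrix.mulVec_mulVec]
            rw [show lam.im • (Q *ᵥ x₁) + lam.re • (Q *ᵥ x₂) - (Q * B) *ᵥ vim u - R *ᵥ vim w
                = -(R *ᵥ vim w - (lam.im • (Q *ᵥ x₁) + lam.re • (Q *ᵥ x₂)) + (Q * B) *ᵥ vim u)
              from by abel, E2, neg_zero]
          have hf₂x₁ : f₂ x₁ = 0 := hf₂0 x₁ (Submodule.mem_span_singleton_self x₁)
          have hf₁x₂ : f₁ x₂ = 0 := hf₁0 x₂ (Submodule.mem_span_singleton_self x₂)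
          obtain ⟨A, hA, hAx₁, hAx₂⟩ := build2 hA₀ f₁ f₂ hf₁1 hf₁x₂ hf₂x₁ hf₂1 hQ1 hQ2
          have he1 : (cx A - lam • 1) *ᵥ mkv x₁ x₂ + cx B *ᵥ mkv (vre u) (vim u) = 0 := by
            rw [cx_eq_cpx, cx_eq_cpx, ← cpx_one, pencil_apply, mkv_eq_zero]
            constructor
            · simp only [Matrix.one_mulVec]
              rw [hAx₁, ← hv₁]; abel
            · simp only [Matrix.one_mulVec]
              rw [hAx₂, ← hv₂]; abel
          have he2 : cx C *ᵥ mkv x₁ x₂ + cx D *ᵥ mkv (vre u) (vim u) = 0 := by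
            rw [cx_eq_cpx, cx_eq_cpx, out_apply, mkv_eq_zero]
            exact ⟨E3, E4⟩
          have hres := hbig' A hA lam hlam (mkv x₁ x₂) (mkv (vre u) (vim u)) he1 he2
          exact hxne (mkv_eq_zero.mp hres)
  · -- sufficiency
    rintro ⟨hcomap, hsmallrk⟩ A hA lam hlam
    rw [bigiff A lam]
    intro xx uu e1 e2
    have e2' : C *ᵥ vre xx + D *ᵥ vre uu = 0 ∧ C *ᵥ vim xx + D *ᵥ vim uu = 0 := by
      have e2c : cpx C *ᵥ mkv (vre xx) (vim xx) + cpx D *ᵥ mkv (vre uu) (vim uu) = 0 := by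
        rw [mkv_vre_vim, mkv_vre_vim]; exact e2
      rw [out_apply, mkv_eq_zero] at e2c
      exact e2c
    have hmem1 : vre xx ∈ (LinearMap.range D.mulVecLin).comap C.mulVecLin := by
      refine ⟨-(vre uu), ?_⟩
      rw [Matrix.mulVecLin_apply, Matrix.mulVecLin_apply, Matrix.mulVec_neg]
      exact neg_eq_of_add_eq_zero_left e2'.1
    have hmem2 : vim xx ∈ (LinearMap.range D.mulVecLin).comap C.mulVecLin := by
      refine ⟨-(vim uu), ?_⟩
      rw [Matrix.mulVecLin_apply, Matrix.mulVecLin_apply, Matrix.mulVec_neg]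
      exact neg_eq_of_add_eq_zero_left e2'.2
    obtain ⟨w₁', hw₁'⟩ := hcomap hmem1
    obtain ⟨w₂', hw₂'⟩ := hcomap hmem2
    rw [Matrix.mulVecLin_apply] at hw₁' hw₂'
    have hPww : cx P *ᵥ mkv w₁' w₂' = xx := by
      rw [cx_eq_cpx, cpx_mulVec_mkv, hw₁', hw₂', mkv_vre_vim]
    have e1x : cx A *ᵥ xx - lam • xx + cx B *ᵥ uu = 0 := by
      rw [Matrix.sub_mulVec, Matrix.smul_mulVec, Matrix.one_mulVec] at e1
      exact e1
    have hQe : cx Q *ᵥ (cx A *ᵥ xx) - lam • (cx Q *ᵥ xx) + cx Q *ᵥ (cx B *ᵥ uu) = 0 := by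
      have := congrArg (fun y => cx Q *ᵥ y) e1x
      simpa only [Matrix.mulVec_add, Matrix.mulVec_sub, Matrix.mulVec_smul,
        Matrix.mulVec_zero] using this
    rw [← hPww] at hQe
    have t1 : cx Q *ᵥ (cx A *ᵥ (cx P *ᵥ mkv w₁' w₂')) = cx R *ᵥ mkv w₁' w₂' := by
      rw [Matrix.mulVec_mulVec, Matrix.mulVec_mulVec]
      have hQAP : cx Q * cx A * cx P = cx R := by
        rw [cx_eq_cpx A, cx_eq_cpx P, cx_eq_cpx Q, cx_eq_cpx R, ← cpx_mul, ← cpx_mul, ← hA]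
      rw [hQAP]
    have t2 : cx Q *ᵥ (cx P *ᵥ mkv w₁' w₂') = (cx Q * cx P) *ᵥ mkv w₁' w₂' :=
      Matrix.mulVec_mulVec _ _ _
    have t3 : cx Q *ᵥ (cx B *ᵥ uu) = (cx Q * cx B) *ᵥ uu := Matrix.mulVec_mulVec _ _ _
    rw [t1, t2, t3] at hQe
    have e1'' : (cx R - lam • (cx Q * cx P)) *ᵥ mkv w₁' w₂' + (cx Q * cx B) *ᵥ uu = 0 := by
      rw [Matrix.sub_mulVec, Matrix.smul_mulVec]
      exact hQe
    have e2'' : (cx C * cx P) *ᵥ mkv w₁' w₂' + cx D *ᵥ uu = 0 := by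
      rw [← Matrix.mulVec_mulVec, hPww]
      exact e2
    have hfin := (smalliff hker lam).mp (hsmallrk lam hlam) _ uu e1'' e2''
    rw [hPww] at hfin
    exact hfin


end RankAux

open RankAux in
/-- main rank theorem for the affine set 𝒜 = { A : R = Q A P }. -/
theorem rank_equivalences (n r l m p : ℕ)
    (P : Matrix (Fin n) (Fin r) ℝ) (Q : Matrix (Fin l) (Fin n) ℝ)
    (R : Matrix (Fin l) (Fin r) ℝ)
    (B : Matrix (Fin n) (Fin m) ℝ) (C : Matrix (Fin p) (Fin n) ℝ)
    (D : Matrix (Fin p) (Fin m) ℝ)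
    (him : LinearMap.range R.mulVecLin ≤ LinearMap.range Q.mulVecLin)
    (hker : LinearMap.ker P.mulVecLin ≤ LinearMap.ker R.mulVecLin) :
    -- (i)
    ((∀ A : Matrix (Fin n) (Fin n) ℝ, R = Q * A * P → ∀ lam : ℂ,
        (fromBlocks (cx A - lam • 1) (cx B) (cx C) (cx D)).rank
          = n + (fromRows B D).rank) ↔
      ((LinearMap.range D.mulVecLin).comap C.mulVecLin ≤ LinearMap.range P.mulVecLin ∧
        ∀ lam : ℂ,
          (fromBlocks (cx R - lam • (cx Q * cx P)) (cx Q * cx B) (cx C * cx P) (cx D)).rank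
            = P.rank + (fromRows (Q * B) D).rank))
    ∧
    -- (ii)
    ((∀ A : Matrix (Fin n) (Fin n) ℝ, R = Q * A * P → ∀ lam : ℂ, 1 ≤ ‖lam‖ →
        (fromBlocks (cx A - lam • 1) (cx B) (cx C) (cx D)).rank
          = n + (fromRows B D).rank) ↔
      ((LinearMap.range D.mulVecLin).comap C.mulVecLin ≤ LinearMap.range P.mulVecLin ∧
        ∀ lam : ℂ, 1 ≤ ‖lam‖ →
          (fromBlocks (cx R - lam • (cx Q * cx P)) (cx Q * cx B) (cx C * cx P) (cx D)).rank
            = P.rank + (fromRows (Q * B) D).rank)) := by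
  constructor
  · have h := RankAux.mainS (P := P) (Q := Q) (R := R) (B := B) (C := C) (D := D)
      him hker Set.univ (Set.mem_univ _)
    constructor
    · intro hL
      have h2 := h.mp (fun A hA lam _ => hL A hA lam)
      exact ⟨h2.1, fun lam => h2.2 lam (Set.mem_univ _)⟩
    · rintro ⟨hc, hs⟩ A hA lam
      exact (h.mpr ⟨hc, fun lam _ => hs lam⟩) A hA lam (Set.mem_univ _)
  · have hS1 : (1 : ℂ) ∈ {z : ℂ | 1 ≤ ‖z‖} := by
      simp [Set.mem_setOf_eq]
    have h := RankAux.mainS (P := P) (Q := Q) (R := R) (B := B) (C := C) (D := D)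
      him hker {z : ℂ | 1 ≤ ‖z‖} hS1
    constructor
    · intro hL
      have h2 := h.mp (fun A hA lam hm => hL A hA lam hm)
      exact ⟨h2.1, fun lam hm => h2.2 lam hm⟩
    · rintro ⟨hc, hs⟩ A hA lam hm
      exact (h.mpr ⟨hc, fun lam hm => hs lam hm⟩) A hA lam hm
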